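/- Let A ∈ ℝ^{3×3} with singular value decomposition A = U S Vᵀ where U, V ∈ O(3) and S = diag(s₁,s₂,s₃) with s₁ ≥ s₂ ≥ s₃ ≥ 0 and s₂ + s₃ det(UV) ≥ 0. Then R* = U diag(1, 1, det(UV)) Vᵀ maximizes tr(Aᵀ R) over R ∈ SO(3), and hence minimizes f(R) = (1/2)‖A − R‖²_F over SO(3). -/
import Mathlib


open Matrix


lemma so3_trace (Q : Matrix (Fin 3) (Fin 3) ℝ) (h : Qᵀ * Q = 1) (hd : Q.det = 1) :
    -1 ≤ Q.trace := by
  have h1 : Q * Q.adjugate = 1 := by rw [Matrix.mul_adjugate, hd, one_smul]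
  have hadj : Q.adjugate = Qᵀ := by
    calc Q.adjugate = (Qᵀ * Q) * Q.adjugate := by rw [h, Matrix.one_mul]
    _ = Qᵀ * (Q * Q.adjugate) := Matrix.mul_assoc _ _ _
    _ = Qᵀ := by rw [h1, Matrix.mul_one]
  have c0 := congrFun (congrFun hadj 0) 0
  have c1 := congrFun (congrFun hadj 1) 1
  have c2 := congrFun (congrFun hadj 2) 2
  simp [Matrix.adjugate_fin_three] at c0 c1 c2
  have e0 := congrFun (congrFun h 0) 0
  have e1 := congrFun (congrFun h 1) 1
  have e2 := congrFun (congrFun h 2) 2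
  simp [Matrix.mul_apply, Fin.sum_univ_three, Matrix.one_apply] at e0 e1 e2
  simp [Matrix.trace_fin_three]
  nlinarith [sq_nonneg (Q 2 1 - Q 1 2), sq_nonneg (Q 0 2 - Q 2 0), sq_nonneg (Q 1 0 - Q 0 1),
    sq_nonneg (Q 0 0 + Q 1 1 + Q 2 2 + 1), sq_nonneg (Q 0 0), sq_nonneg (Q 1 1), sq_nonneg (Q 2 2)]

lemma o3_diag (W : Matrix (Fin 3) (Fin 3) ℝ) (h : Wᵀ * W = 1) :
    W 0 0 ≤ 1 ∧ W 1 1 ≤ 1 ∧ W 2 2 ≤ 1 := by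
  have e0 := congrFun (congrFun h 0) 0
  have e1 := congrFun (congrFun h 1) 1
  have e2 := congrFun (congrFun h 2) 2
  simp [Matrix.mul_apply, Fin.sum_univ_three, Matrix.one_apply] at e0 e1 e2
  refine ⟨by nlinarith [sq_nonneg (W 0 0 - 1)], by nlinarith [sq_nonneg (W 1 1 - 1)],
    by nlinarith [sq_nonneg (W 2 2 - 1)]⟩

lemma o3_trace (W : Matrix (Fin 3) (Fin 3) ℝ) (h : Wᵀ * W = 1) :
    W.trace ≤ 2 + W.det := by
  have hd2 : W.det ^ 2 = 1 := by
    have := congrArg Matrix.det h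
    simpa [Matrix.det_mul, Matrix.det_transpose, sq] using this
  have hcases : W.det = 1 ∨ W.det = -1 := by
    have : (W.det - 1) * (W.det + 1) = 0 := by ring_nf; linarith [hd2]
    rcases mul_eq_zero.mp this with h' | h'
    · exact Or.inl (by linarith)
    · exact Or.inr (by linarith)
  obtain ⟨d0, d1, d2⟩ := o3_diag W h
  rcases hcases with hd | hd
  · rw [hd]; simp [Matrix.trace_fin_three]; linarith
  · have hQ : (-W)ᵀ * (-W) = 1 := by simpa using h
    have hQd : (-W).det = 1 := by simp [Matrix.det_neg, hd, Fintype.card_fin]; norm_num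
    have := so3_trace (-W) hQ hQd
    rw [hd]
    have : -W.trace ≥ -1 := by simpa using this
    linarith

/-- solution of Wahba's problem. Given an SVD `A = U S Vᵀ` with
`s₁ ≥ s₂ ≥ s₃ ≥ 0` and `s₂ + s₃ det(UV) ≥ 0`, the matrix
`R* = U diag(1,1,det(UV)) Vᵀ` maximizes `tr(Aᵀ R)` over `SO(3)` and hence
minimizes `f(R) = (1/2)‖A − R‖²_F` over `SO(3)`. -/
theorem wahba_solution
    (A U V : Matrix (Fin 3) (Fin 3) ℝ) (s : Fin 3 → ℝ)
    (hU : Uᵀ * U = 1) (hV : Vᵀ * V = 1)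
    (hA : A = U * Matrix.diagonal s * Vᵀ)
    (hs01 : s 1 ≤ s 0) (hs12 : s 2 ≤ s 1) (hs2 : 0 ≤ s 2)
    (hstab : 0 ≤ s 1 + s 2 * (U * V).det) :
    ∀ R : Matrix (Fin 3) (Fin 3) ℝ, Rᵀ * R = 1 → R.det = 1 →
      Matrix.trace (Aᵀ * R) ≤
        Matrix.trace (Aᵀ * (U * Matrix.diagonal ![1, 1, (U * V).det] * Vᵀ)) ∧
      (1 / 2 : ℝ) * Matrix.trace ((A - U * Matrix.diagonal ![1, 1, (U * V).det] * Vᵀ)ᵀ *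
          (A - U * Matrix.diagonal ![1, 1, (U * V).det] * Vᵀ)) ≤
        (1 / 2 : ℝ) * Matrix.trace ((A - R)ᵀ * (A - R)) := by
  intro R hR hRdet
  set d : ℝ := (U * V).det with hd_def
  set D : Matrix (Fin 3) (Fin 3) ℝ := Matrix.diagonal ![1, 1, d] with hD_def
  set Rs : Matrix (Fin 3) (Fin 3) ℝ := U * D * Vᵀ with hRs_def
  have hUU : U * Uᵀ = 1 := mul_eq_one_comm.mp hU
  have hVV : V * Vᵀ = 1 := mul_eq_one_comm.mp hV
  have hdUV : d = U.det * V.det := by rw [hd_def, Matrix.det_mul]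
  have hU2 : U.det ^ 2 = 1 := by
    have := congrArg Matrix.det hU
    simpa [Matrix.det_mul, Matrix.det_transpose, sq] using this
  have hV2 : V.det ^ 2 = 1 := by
    have := congrArg Matrix.det hV
    simpa [Matrix.det_mul, Matrix.det_transpose, sq] using this
  have hd2 : d ^ 2 = 1 := by rw [hdUV]; nlinarith
  -- trace formula
  have key : ∀ R' : Matrix (Fin 3) (Fin 3) ℝ,
      Matrix.trace (Aᵀ * R') = Matrix.trace (Matrix.diagonal s * (Uᵀ * R' * V)) := by
    intro R'
    rw [hA]
    have h1 : (U * Matrix.diagonal s * Vᵀ)ᵀ * R'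
        = V * (Matrix.diagonal s * (Uᵀ * R')) := by
      simp [Matrix.transpose_mul, Matrix.diagonal_transpose, Matrix.mul_assoc]
    rw [h1, Matrix.trace_mul_comm, Matrix.mul_assoc]
  -- W := Uᵀ R V
  set W : Matrix (Fin 3) (Fin 3) ℝ := Uᵀ * R * V with hW_def
  have hW : Wᵀ * W = 1 := by
    have h1 : Wᵀ * W = Vᵀ * (Rᵀ * ((U * Uᵀ) * (R * V))) := by
      simp [hW_def, Matrix.transpose_mul, Matrix.mul_assoc]
    rw [h1, hUU, Matrix.one_mul, ← Matrix.mul_assoc Rᵀ, hR, Matrix.one_mul, hV]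
  have hWdet : W.det = d := by
    rw [hW_def, Matrix.det_mul, Matrix.det_mul, Matrix.det_transpose, hRdet, hdUV]; ring
  have hWs : Uᵀ * Rs * V = D := by
    rw [hRs_def]
    calc Uᵀ * (U * D * Vᵀ) * V = (Uᵀ * U) * D * (Vᵀ * V) := by
          simp only [Matrix.mul_assoc]
    _ = D := by rw [hU, hV, Matrix.one_mul, Matrix.mul_one]
  -- traces as sums
  have trW : Matrix.trace (Matrix.diagonal s * W) = s 0 * W 0 0 + s 1 * W 1 1 + s 2 * W 2 2 := by
    simp [Matrix.trace_fin_three, Matrix.mul_apply, Matrix.diagonal, Fin.sum_univ_three]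
  have trD : Matrix.trace (Matrix.diagonal s * D) = s 0 + s 1 + s 2 * d := by
    simp [hD_def, Matrix.trace_fin_three, Matrix.mul_apply, Matrix.diagonal, Fin.sum_univ_three]
  -- the main inequality
  obtain ⟨d0, d1, d2⟩ := o3_diag W hW
  have htr := o3_trace W hW
  rw [hWdet] at htr
  have htr' : W 0 0 + W 1 1 + W 2 2 ≤ 2 + d := by
    simpa [Matrix.trace_fin_three] using htr
  have main : Matrix.trace (Aᵀ * R) ≤ Matrix.trace (Aᵀ * Rs) := by
    rw [key R, key Rs, hWs, trW, trD]
    nlinarith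
  refine ⟨main, ?_⟩
  -- second part
  have hRsO : Rsᵀ * Rs = 1 := by
    have hDD : D * D = 1 := by
      have h2 : D * D = Matrix.diagonal (fun i => ![1, 1, d] i * ![1, 1, d] i) := by
        rw [hD_def, Matrix.diagonal_mul_diagonal]
      have h3 : (fun i => ![1, 1, d] i * ![1, 1, d] i) = fun _ => (1:ℝ) := by
        funext i; fin_cases i
        · norm_num
        · norm_num
        · simp; nlinarith [hd2]
      rw [h2, h3]; exact Matrix.diagonal_one
    have hDt : Dᵀ = D := by rw [hD_def, Matrix.diagonal_transpose]
    have h1 : Rsᵀ * Rs = V * (D * ((Uᵀ * U) * (D * Vᵀ))) := by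
      simp [hRs_def, Matrix.transpose_mul, hDt, Matrix.mul_assoc]
    rw [h1, hU, Matrix.one_mul, ← Matrix.mul_assoc D, hDD, Matrix.one_mul, hVV]
  have expand : ∀ R' : Matrix (Fin 3) (Fin 3) ℝ, R'ᵀ * R' = 1 →
      Matrix.trace ((A - R')ᵀ * (A - R'))
        = Matrix.trace (Aᵀ * A) - 2 * Matrix.trace (Aᵀ * R') + 3 := by
    intro R' hR'
    have h1 : (A - R')ᵀ * (A - R') = Aᵀ * A - Aᵀ * R' - R'ᵀ * A + R'ᵀ * R' := by
      rw [Matrix.transpose_sub]; noncomm_ring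
    rw [h1, hR']
    have h2 : Matrix.trace (R'ᵀ * A) = Matrix.trace (Aᵀ * R') := by
      rw [← Matrix.trace_transpose (Aᵀ * R'), Matrix.transpose_mul, Matrix.transpose_transpose]
    simp [Matrix.trace_sub, Matrix.trace_add, h2, Matrix.trace_one]
    ring
  rw [expand R hR, expand Rs hRsO]
  linarith
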